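/- Under the errors-in-variables model with U_1,…,U_K, ε mutually independent and (U_1,…,U_K,ε) independent of X*, assume all of X*_1,…,X*_K, U_1,…,U_K, ε are square-integrable. Let s = (s_1,…,s_K,s_y) ∈ ℝ^{K+1} be a point at which φ_{(X,Y)}(s) ≠ 0. Then for all indices k_1 ≠ k_2 with 1 ≤ k_1,k_2 ≤ K, the second-order logarithmic derivative of the characteristic function of (X,Y) in the directions s_{k_1}, s_{k_2} satisfies Λ_{k_1,k_2}[φ_{(X,Y)}](s) = Λ_{k_1,k_2}[φ_{X*}](s_1 + β_1 s_y, …, s_K + β_K s_y). -/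

import Mathlib

open MeasureTheory ProbabilityTheory

/-- Characteristic function of a random vector `Z : Ω → (Fin d → ℝ)`. -/
noncomputable def charF {Ω : Type*} [MeasurableSpace Ω] (μ : Measure Ω) {d : ℕ}
    (Z : Ω → Fin d → ℝ) (s : Fin d → ℝ) : ℂ :=
  ∫ ω, Complex.exp (Complex.I * ((∑ k, s k * Z ω k : ℝ) : ℂ)) ∂μ

/-- Partial derivative of `φ : ℝ^d → ℂ` in the `j`-th coordinate direction. -/
noncomputable def pd {d : ℕ} (j : Fin d) (φ : (Fin d → ℝ) → ℂ) (s : Fin d → ℝ) : ℂ :=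
  fderiv ℝ φ s (Pi.single j 1)

/-- Second-order logarithmic derivative
`Λ_{j,k}[φ](s) = ∂_j∂_kφ(s)/φ(s) − (∂_jφ(s))(∂_kφ(s))/φ(s)²`. -/
noncomputable def Lam {d : ℕ} (j k : Fin d) (φ : (Fin d → ℝ) → ℂ) (s : Fin d → ℝ) : ℂ :=
  pd j (pd k φ) s / φ s - (pd j φ s) * (pd k φ s) / (φ s) ^ 2

noncomputable def dotL (d : ℕ) : (Fin d → ℝ) →L[ℝ] (Fin d → ℝ) →L[ℝ] ℝ :=
  (-(2 * Real.pi)⁻¹) • ∑ k : Fin d,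
    (ContinuousLinearMap.proj k : (Fin d → ℝ) →L[ℝ] ℝ).smulRight (ContinuousLinearMap.proj k)

lemma dotL_apply (d : ℕ) (v w : Fin d → ℝ) :
    dotL d v w = -(2 * Real.pi)⁻¹ * ∑ k, v k * w k := by
  simp [dotL, Finset.mul_sum, ContinuousLinearMap.sum_apply, mul_comm]

lemma charF_eq_fourier {Ω : Type*} [MeasurableSpace Ω] (μ : Measure Ω) {d : ℕ}
    (Z : Ω → Fin d → ℝ) (hZ : Measurable Z) :
    charF μ Z = VectorFourier.fourierIntegral (Real.fourierChar) (μ.map Z)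
      (dotL d).toLinearMap₁₂ (fun _ => (1 : ℂ)) := by
  funext w
  have hcont : Continuous (fun v : Fin d → ℝ =>
      (Real.fourierChar (-((dotL d).toLinearMap₁₂ v) w) : Circle) • (1 : ℂ)) := by
    apply Continuous.smul ?_ continuous_const
    refine continuous_subtype_val.comp (Real.continuous_fourierChar.comp ?_)
    simp only [ContinuousLinearMap.toLinearMap₁₂_apply_apply_apply]
    fun_prop
  rw [charF, VectorFourier.fourierIntegral,
    integral_map hZ.aemeasurable hcont.aestronglyMeasurable]
  congr 1
  funext ω
  simp only [Circle.smul_def, Real.fourierChar_apply, mul_one, smul_eq_mul]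
  congr 1
  rw [ContinuousLinearMap.toLinearMap₁₂_apply_apply_apply, dotL_apply]
  have hpi : (Real.pi : ℂ) ≠ 0 := by exact_mod_cast Real.pi_ne_zero
  push_cast
  field_simp
  have : ∑ x : Fin d, ((w x : ℂ)) * (Z ω x) = ∑ x : Fin d, ((Z ω x : ℂ)) * (w x) :=
    Finset.sum_congr rfl fun k _ => mul_comm _ _
  rw [this]

lemma charF_contDiff {Ω : Type*} [MeasurableSpace Ω] (μ : Measure Ω) [IsProbabilityMeasure μ]
    {d : ℕ} (Z : Ω → Fin d → ℝ) (hZ : Measurable Z)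
    (hL2 : ∀ k, MemLp (fun ω => Z ω k) 2 μ) : ContDiff ℝ 2 (charF μ Z) := by
  rw [charF_eq_fourier μ Z hZ]
  haveI : IsProbabilityMeasure (μ.map Z) := Measure.isProbabilityMeasure_map hZ.aemeasurable
  apply VectorFourier.contDiff_fourierIntegral
  intro n hn
  have hco : ∀ k : Fin d, MemLp (fun v : Fin d → ℝ => |v k|) 2 (μ.map Z) := by
    intro k
    have h1 : MemLp (fun v : Fin d → ℝ => v k) 2 (μ.map Z) := by
      rw [memLp_map_measure_iff (measurable_pi_apply k).aestronglyMeasurable hZ.aemeasurable]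
      exact hL2 k
    simpa [Real.norm_eq_abs] using h1.norm
  have hg : MemLp (fun v : Fin d → ℝ => ∑ k, |v k|) 2 (μ.map Z) :=
    memLp_finsetSum Finset.univ (fun k _ => hco k)
  have hnorm : MemLp (fun v : Fin d → ℝ => ‖v‖) 2 (μ.map Z) := by
    refine hg.of_le ?_ ?_
    · exact continuous_norm.aestronglyMeasurable
    · filter_upwards with v
      rw [Real.norm_eq_abs, abs_norm, Real.norm_eq_abs]
      refine le_trans ?_ (le_abs_self _)
      refine (pi_norm_le_iff_of_nonneg (Finset.sum_nonneg fun k _ => abs_nonneg _)).2 fun i => ?_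
      rw [Real.norm_eq_abs]
      exact Finset.single_le_sum (fun k (_ : k ∈ Finset.univ) => abs_nonneg (v k)) (Finset.mem_univ i)
  simp only [norm_one, mul_one]
  have hn' : n ≤ 2 := by exact_mod_cast hn
  interval_cases n
  · simpa using (integrable_const (1:ℝ))
  · simpa using hnorm.integrable one_le_two
  · simpa using hnorm.integrable_sq

lemma pd_contDiff_one {d : ℕ} (k : Fin d) {φ : (Fin d → ℝ) → ℂ} (hφ : ContDiff ℝ 2 φ) :
    ContDiff ℝ 1 (pd k φ) := by
  have h := hφ.fderiv_right (m := 1) (by norm_num)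
  exact (ContinuousLinearMap.apply ℝ ℂ (Pi.single k 1 : Fin d → ℝ)).contDiff.comp h

lemma pd_add {d : ℕ} (j : Fin d) {f g : (Fin d → ℝ) → ℂ} {x : Fin d → ℝ}
    (hf : DifferentiableAt ℝ f x) (hg : DifferentiableAt ℝ g x) :
    pd j (fun y => f y + g y) x = pd j f x + pd j g x := by
  unfold pd
  rw [fderiv_fun_add hf hg]
  rfl

lemma pd_mul {d : ℕ} (j : Fin d) {f g : (Fin d → ℝ) → ℂ} {x : Fin d → ℝ}
    (hf : DifferentiableAt ℝ f x) (hg : DifferentiableAt ℝ g x) :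
    pd j (fun y => f y * g y) x = pd j f x * g x + f x * pd j g x := by
  unfold pd
  rw [fderiv_fun_mul hf hg]
  simp only [ContinuousLinearMap.add_apply, ContinuousLinearMap.smul_apply, smul_eq_mul]
  ring

lemma pd_comp {d m : ℕ} (j : Fin d) (P : (Fin d → ℝ) →L[ℝ] (Fin m → ℝ))
    {Φ : (Fin m → ℝ) → ℂ} {x : Fin d → ℝ} (hΦ : DifferentiableAt ℝ Φ (P x)) :
    pd j (fun y => Φ (P y)) x = fderiv ℝ Φ (P x) (P (Pi.single j 1)) := by
  unfold pd
  rw [show (fun y => Φ (P y)) = Φ ∘ P from rfl, fderiv_comp (x := x) hΦ P.differentiableAt,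
    P.fderiv]
  rfl

lemma Lam_mul {d : ℕ} (j k : Fin d) {f g : (Fin d → ℝ) → ℂ}
    (hf : ContDiff ℝ 2 f) (hg : ContDiff ℝ 2 g) (s : Fin d → ℝ)
    (hf0 : f s ≠ 0) (hg0 : g s ≠ 0) :
    Lam j k (fun x => f x * g x) s = Lam j k f s + Lam j k g s := by
  have hfd : Differentiable ℝ f := hf.differentiable (by norm_num)
  have hgd : Differentiable ℝ g := hg.differentiable (by norm_num)
  have hfk : Differentiable ℝ (pd k f) := (pd_contDiff_one k hf).differentiable (by norm_num)
  have hgk : Differentiable ℝ (pd k g) := (pd_contDiff_one k hg).differentiable (by norm_num)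
  have h1 : pd k (fun y => f y * g y) = fun x => pd k f x * g x + f x * pd k g x :=
    funext fun x => pd_mul k (hfd x) (hgd x)
  have h2 : pd j (pd k (fun y => f y * g y)) s
      = (pd j (pd k f) s * g s + pd k f s * pd j g s)
        + (pd j f s * pd k g s + f s * pd j (pd k g) s) := by
    rw [h1, pd_add j (f := fun y => pd k f y * g y) (g := fun y => f y * pd k g y) (((hfk s)).mul (hgd s)) ((hfd s).mul (hgk s)),
      pd_mul j (hfk s) (hgd s), pd_mul j (hfd s) (hgk s)]
  have h3 : pd j (fun x => f x * g x) s = pd j f s * g s + f s * pd j g s :=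
    pd_mul j (hfd s) (hgd s)
  have h4 : pd k (fun x => f x * g x) s = pd k f s * g s + f s * pd k g s :=
    pd_mul k (hfd s) (hgd s)
  unfold Lam
  rw [h2, h3, h4]
  field_simp
  ring

lemma Lam_comp {d m : ℕ} {F : (Fin m → ℝ) → ℂ} (hF : ContDiff ℝ 2 F)
    (P : (Fin d → ℝ) →L[ℝ] (Fin m → ℝ)) (j1 j2 : Fin d) (k1 k2 : Fin m)
    (h1 : P (Pi.single j1 1) = Pi.single k1 1) (h2 : P (Pi.single j2 1) = Pi.single k2 1)
    (s : Fin d → ℝ) :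
    Lam j1 j2 (fun x => F (P x)) s = Lam k1 k2 F (P s) := by
  have hFd : Differentiable ℝ F := hF.differentiable (by norm_num)
  have hF2 : Differentiable ℝ (pd k2 F) := (pd_contDiff_one k2 hF).differentiable (by norm_num)
  have e1 : pd j2 (fun y => F (P y)) = fun x => pd k2 F (P x) :=
    funext fun x => by rw [pd_comp j2 P (hFd (P x)), h2]; rfl
  have e2 : pd j1 (pd j2 (fun y => F (P y))) s = pd k1 (pd k2 F) (P s) := by
    rw [e1, pd_comp j1 P (hF2 (P s)), h1]; rfl
  have e3 : pd j1 (fun y => F (P y)) s = pd k1 F (P s) := by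
    rw [pd_comp j1 P (hFd (P s)), h1]; rfl
  have e4 : pd j2 (fun y => F (P y)) s = pd k2 F (P s) := by
    rw [pd_comp j2 P (hFd (P s)), h2]; rfl
  unfold Lam
  rw [e2, e3, e4]

lemma Lam_zero_right {d m : ℕ} {Φ : (Fin m → ℝ) → ℂ} (hΦ : ContDiff ℝ 2 Φ)
    (P : (Fin d → ℝ) →L[ℝ] (Fin m → ℝ)) (j1 j2 : Fin d)
    (h : P (Pi.single j2 1) = 0) (s : Fin d → ℝ) :
    Lam j1 j2 (fun x => Φ (P x)) s = 0 := by
  have hΦd : Differentiable ℝ Φ := hΦ.differentiable (by norm_num)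
  have e1 : pd j2 (fun y => Φ (P y)) = fun _ => 0 :=
    funext fun x => by rw [pd_comp j2 P (hΦd (P x)), h, map_zero]
  have e2 : pd j1 (pd j2 (fun y => Φ (P y))) s = 0 := by
    rw [e1]; unfold pd; rw [fderiv_fun_const]; rfl
  have e4 : pd j2 (fun y => Φ (P y)) s = 0 := by rw [e1]
  unfold Lam
  rw [e2, e4]
  simp

lemma Lam_zero_left {d m : ℕ} {Φ : (Fin m → ℝ) → ℂ} (hΦ : ContDiff ℝ 2 Φ)
    (P : (Fin d → ℝ) →L[ℝ] (Fin m → ℝ)) (j1 j2 : Fin d)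
    (h : P (Pi.single j1 1) = 0) (s : Fin d → ℝ) :
    Lam j1 j2 (fun x => Φ (P x)) s = 0 := by
  have hΦd : Differentiable ℝ Φ := hΦ.differentiable (by norm_num)
  set g : (Fin m → ℝ) → ℂ := fun y => fderiv ℝ Φ y (P (Pi.single j2 1)) with hgdef
  have hgC : ContDiff ℝ 1 g :=
    (ContinuousLinearMap.apply ℝ ℂ (P (Pi.single j2 1))).contDiff.comp
      (hΦ.fderiv_right (m := 1) (by norm_num))
  have e1 : pd j2 (fun y => Φ (P y)) = fun x => g (P x) :=
    funext fun x => pd_comp j2 P (hΦd (P x))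
  have e2 : pd j1 (pd j2 (fun y => Φ (P y))) s = 0 := by
    rw [e1, pd_comp j1 P ((hgC.differentiable (by norm_num)) (P s)), h, map_zero]
  have e3 : pd j1 (fun y => Φ (P y)) s = 0 := by
    rw [pd_comp j1 P (hΦd (P s)), h, map_zero]
  unfold Lam
  rw [e2, e3]
  simp

lemma indep_integral_mul {Ω : Type*} [MeasurableSpace Ω] {μ : Measure Ω} [IsProbabilityMeasure μ]
    {α β : Type*} [MeasurableSpace α] [TopologicalSpace α] [OpensMeasurableSpace α] [SecondCountableTopology α]
    [MeasurableSpace β] [TopologicalSpace β] [OpensMeasurableSpace β] [SecondCountableTopology β]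
    {A : Ω → α} {B : Ω → β} (hA : AEMeasurable A μ) (hB : AEMeasurable B μ)
    (hAB : IndepFun A B μ) {f : α → ℂ} {g : β → ℂ} (hf : Continuous f) (hg : Continuous g) :
    ∫ ω, f (A ω) * g (B ω) ∂μ = (∫ ω, f (A ω) ∂μ) * ∫ ω, g (B ω) ∂μ := by
  have hmap := (indepFun_iff_map_prod_eq_prod_map_map hA hB).mp hAB
  haveI : IsProbabilityMeasure (μ.map A) := Measure.isProbabilityMeasure_map hA
  haveI : IsProbabilityMeasure (μ.map B) := Measure.isProbabilityMeasure_map hB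
  calc ∫ ω, f (A ω) * g (B ω) ∂μ
      = ∫ p : α × β, f p.1 * g p.2 ∂(μ.map (fun ω => (A ω, B ω))) :=
        (integral_map (hA.prodMk hB)
          ((hf.comp continuous_fst).mul (hg.comp continuous_snd)).aestronglyMeasurable).symm
    _ = ∫ p : α × β, f p.1 * g p.2 ∂((μ.map A).prod (μ.map B)) := by rw [hmap]
    _ = (∫ a, f a ∂(μ.map A)) * ∫ b, g b ∂(μ.map B) := integral_prod_mul f g
    _ = (∫ ω, f (A ω) ∂μ) * ∫ ω, g (B ω) ∂μ := by
        rw [integral_map hA hf.aestronglyMeasurable, integral_map hB hg.aestronglyMeasurable]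

set_option maxHeartbeats 2000000 in
theorem stmt1 {Ω : Type*} [MeasurableSpace Ω] (μ : Measure Ω) [IsProbabilityMeasure μ]
    (K : ℕ) (Xstar : Ω → Fin K → ℝ) (U : Fin K → Ω → ℝ) (eps : Ω → ℝ) (β : Fin K → ℝ)
    (X : Fin K → Ω → ℝ) (Y : Ω → ℝ)
    (hXm : Measurable Xstar) (hUm : ∀ k, Measurable (U k)) (hem : Measurable eps)
    (hX : ∀ k ω, X k ω = Xstar ω k + U k ω)
    (hY : ∀ ω, Y ω = ∑ k, β k * Xstar ω k + eps ω)
    (hIndep1 : iIndepFun ((Fin.snoc U eps : Fin (K+1) → Ω → ℝ)) μ)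
    (hIndep2 : IndepFun (fun ω => (fun k => U k ω, eps ω)) Xstar μ)
    (hL2X : ∀ k, MemLp (fun ω => Xstar ω k) 2 μ)
    (hL2U : ∀ k, MemLp (U k) 2 μ) (hL2e : MemLp eps 2 μ)
    (s : Fin (K+1) → ℝ)
    (hne : charF μ (fun ω => Fin.snoc (fun k => X k ω) (Y ω)) s ≠ 0)
    (k1 k2 : Fin K) (hk : k1 ≠ k2) :
    Lam (Fin.castSucc k1) (Fin.castSucc k2)
        (charF μ (fun ω => Fin.snoc (fun k => X k ω) (Y ω))) s
      = Lam k1 k2 (charF μ Xstar)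
          (fun k => s (Fin.castSucc k) + β k * s (Fin.last K)) := by
  classical
  set W : Fin (K+1) → Ω → ℝ := (Fin.snoc U eps : Fin (K+1) → Ω → ℝ) with hWdef
  have hWm : ∀ j, Measurable (W j) := by
    intro j
    refine Fin.lastCases ?_ (fun i => ?_) j
    · simpa [hWdef, Fin.snoc_last] using hem
    · simpa [hWdef, Fin.snoc_castSucc] using hUm i
  have hWL2 : ∀ j, MemLp (W j) 2 μ := by
    intro j
    refine Fin.lastCases ?_ (fun i => ?_) j
    · simpa [hWdef, Fin.snoc_last] using hL2e
    · simpa [hWdef, Fin.snoc_castSucc] using hL2U i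
  -- the continuous linear maps
  set Tclm : (Fin (K+1) → ℝ) →L[ℝ] (Fin K → ℝ) :=
    ContinuousLinearMap.pi (fun k => ContinuousLinearMap.proj (Fin.castSucc k)
      + β k • ContinuousLinearMap.proj (Fin.last K)) with hTdef
  have hTapp : ∀ (x : Fin (K+1) → ℝ) (k : Fin K),
      Tclm x k = x (Fin.castSucc k) + β k * x (Fin.last K) := by
    intro x k
    simp [hTdef]
  set P1 : (Fin (K+1) → ℝ) →L[ℝ] (Fin 1 → ℝ) :=
    ContinuousLinearMap.pi (fun _ => ContinuousLinearMap.proj (Fin.castSucc k1)) with hP1def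
  have hP1app : ∀ (x : Fin (K+1) → ℝ) (i : Fin 1), P1 x i = x (Fin.castSucc k1) := by
    intro x i; simp [hP1def]
  set P2 : (Fin (K+1) → ℝ) →L[ℝ] (Fin (K+1) → ℝ) :=
    ContinuousLinearMap.pi (fun j => if j = Fin.castSucc k1 then 0
      else ContinuousLinearMap.proj j) with hP2def
  have hP2app : ∀ (x : Fin (K+1) → ℝ) (j : Fin (K+1)),
      P2 x j = if j = Fin.castSucc k1 then 0 else x j := by
    intro x j
    by_cases h : j = Fin.castSucc k1 <;> simp [hP2def, h]
  -- the random vectors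
  set W2 : Ω → Fin (K+1) → ℝ := fun ω j => if j = Fin.castSucc k1 then 0 else W j ω with hW2def
  have hW2m : Measurable W2 := by
    apply measurable_pi_lambda
    intro j
    by_cases h : j = Fin.castSucc k1 <;> simp [hW2def, h, hWm j, measurable_const]
  have hW2L2 : ∀ j, MemLp (fun ω => W2 ω j) 2 μ := by
    intro j
    by_cases h : j = Fin.castSucc k1 <;> simp [hW2def, h]
    · exact hWL2 j
  set Z1 : Ω → Fin 1 → ℝ := fun ω _ => W (Fin.castSucc k1) ω with hZ1def
  have hZ1m : Measurable Z1 := measurable_pi_lambda _ (fun _ => hWm _)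
  -- characteristic functions
  set F : (Fin K → ℝ) → ℂ := charF μ Xstar with hFdef
  set Phi1 : (Fin 1 → ℝ) → ℂ := charF μ Z1 with hPhi1def
  set G2 : (Fin (K+1) → ℝ) → ℂ := charF μ W2 with hG2def
  have hFC : ContDiff ℝ 2 F := charF_contDiff μ Xstar hXm hL2X
  have hPhi1C : ContDiff ℝ 2 Phi1 := charF_contDiff μ Z1 hZ1m (fun _ => hWL2 _)
  have hG2C : ContDiff ℝ 2 G2 := charF_contDiff μ W2 hW2m hW2L2
  -- pointwise real sum identities
  have hsnocpt : ∀ (ω : Ω) (j : Fin (K+1)),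
      (Fin.snoc (fun k => U k ω) (eps ω) : Fin (K+1) → ℝ) j = W j ω := by
    intro ω j
    refine Fin.lastCases ?_ (fun i => ?_) j
    · simp [hWdef]
    · simp [hWdef]
  have A1 : ∀ (x : Fin (K+1) → ℝ) (ω : Ω),
      (∑ j, x j * (Fin.snoc (fun k => X k ω) (Y ω) : Fin (K+1) → ℝ) j)
        = (∑ k, Tclm x k * Xstar ω k) + ∑ j, x j * W j ω := by
    intro x ω
    have hW : (∑ j, x j * W j ω)
        = (∑ k, x (Fin.castSucc k) * U k ω) + x (Fin.last K) * eps ω := by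
      rw [Fin.sum_univ_castSucc]
      simp [hWdef]
    rw [hW, Fin.sum_univ_castSucc]
    simp only [Fin.snoc_castSucc, Fin.snoc_last, hX, hY, hTapp]
    simp only [mul_add, add_mul, Finset.mul_sum, Finset.sum_add_distrib]
    ring_nf
  -- the factorization of the characteristic function of (X,Y)
  have hfact : charF μ (fun ω => Fin.snoc (fun k => X k ω) (Y ω)) 
      = fun x => F (Tclm x) * (Phi1 (P1 x) * G2 x) := by
    funext x
    have hg0cont : Continuous (fun p : (Fin K → ℝ) × ℝ =>
        Complex.exp (Complex.I *
          ((∑ j, x j * (Fin.snoc p.1 p.2 : Fin (K+1) → ℝ) j : ℝ) : ℂ))) := by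
      refine Complex.continuous_exp.comp (continuous_const.mul
        (Complex.continuous_ofReal.comp ?_))
      refine continuous_finset_sum _ (fun j _ => continuous_const.mul ?_)
      refine Fin.lastCases ?_ (fun i => ?_) j
      · simpa only [Fin.snoc_last] using continuous_snd
      · simpa only [Fin.snoc_castSucc, Function.comp_def] using (continuous_apply i).comp continuous_fst
    have hf0cont : Continuous (fun z : Fin K → ℝ =>
        Complex.exp (Complex.I * ((∑ k, Tclm x k * z k : ℝ) : ℂ))) := by
      refine Complex.continuous_exp.comp (continuous_const.mul
        (Complex.continuous_ofReal.comp ?_))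
      exact continuous_finset_sum _ (fun k _ => continuous_const.mul (continuous_apply k))
    have hPUm : Measurable (fun ω => ((fun k => U k ω : Fin K → ℝ), eps ω)) :=
      (measurable_pi_lambda _ (fun k => hUm k)).prodMk hem
    have h1 : charF μ (fun ω => Fin.snoc (fun k => X k ω) (Y ω)) x
        = ∫ ω, (fun p : (Fin K → ℝ) × ℝ =>
            Complex.exp (Complex.I *
              ((∑ j, x j * (Fin.snoc p.1 p.2 : Fin (K+1) → ℝ) j : ℝ) : ℂ)))
            ((fun ω => ((fun k => U k ω : Fin K → ℝ), eps ω)) ω)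
          * (fun z : Fin K → ℝ =>
            Complex.exp (Complex.I * ((∑ k, Tclm x k * z k : ℝ) : ℂ))) (Xstar ω) ∂μ := by
      rw [charF]
      congr 1
      funext ω
      simp only
      have e0 : (∑ j, x j * (Fin.snoc (fun k => U k ω) (eps ω) : Fin (K+1) → ℝ) j)
          = ∑ j, x j * W j ω :=
        Finset.sum_congr rfl (fun j _ => by rw [hsnocpt ω j])
      have e1 : ((∑ j, x j * (Fin.snoc (fun k => X k ω) (Y ω) : Fin (K+1) → ℝ) j : ℝ) : ℂ)
          = ((∑ j, x j * (Fin.snoc (fun k => U k ω) (eps ω) : Fin (K+1) → ℝ) j : ℝ) : ℂ)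
            + ((∑ k, Tclm x k * Xstar ω k : ℝ) : ℂ) := by
        rw [e0, A1 x ω]
        push_cast
        ring
      rw [e1, mul_add, Complex.exp_add]
    rw [h1, indep_integral_mul hPUm.aemeasurable hXm.aemeasurable hIndep2 hg0cont hf0cont]
    have h3 : (∫ ω, (fun z : Fin K → ℝ =>
        Complex.exp (Complex.I * ((∑ k, Tclm x k * z k : ℝ) : ℂ))) (Xstar ω) ∂μ)
        = F (Tclm x) := rfl
    have h4 : (∫ ω, (fun p : (Fin K → ℝ) × ℝ =>
        Complex.exp (Complex.I *
          ((∑ j, x j * (Fin.snoc p.1 p.2 : Fin (K+1) → ℝ) j : ℝ) : ℂ)))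
        ((fun ω => ((fun k => U k ω : Fin K → ℝ), eps ω)) ω) ∂μ)
        = Phi1 (P1 x) * G2 x := by
      -- rewrite the integrand in terms of W
      have h5 : (∫ ω, (fun p : (Fin K → ℝ) × ℝ =>
          Complex.exp (Complex.I *
            ((∑ j, x j * (Fin.snoc p.1 p.2 : Fin (K+1) → ℝ) j : ℝ) : ℂ)))
          ((fun ω => ((fun k => U k ω : Fin K → ℝ), eps ω)) ω) ∂μ)
          = ∫ ω, (fun y : ({Fin.castSucc k1} : Finset (Fin (K+1))) → ℝ =>
              Complex.exp (Complex.I * ((x (Fin.castSucc k1)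
                * y ⟨Fin.castSucc k1, Finset.mem_singleton_self _⟩ : ℝ) : ℂ)))
              ((fun a (i : ({Fin.castSucc k1} : Finset (Fin (K+1)))) => W i a) ω)
            * (fun y : (Finset.univ.erase (Fin.castSucc k1) : Finset (Fin (K+1))) → ℝ =>
              Complex.exp (Complex.I *
                ((∑ j : (Finset.univ.erase (Fin.castSucc k1) : Finset (Fin (K+1))),
                  x j * y j : ℝ) : ℂ)))
              ((fun a (i : (Finset.univ.erase (Fin.castSucc k1) : Finset (Fin (K+1)))) =>
                W i a) ω) ∂μ := by
        congr 1
        funext ω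
        simp only
        have e0 : (∑ j, x j * (Fin.snoc (fun k => U k ω) (eps ω) : Fin (K+1) → ℝ) j)
            = ∑ j, x j * W j ω :=
          Finset.sum_congr rfl (fun j _ => by rw [hsnocpt ω j])
        have e3 : (∑ j : (Finset.univ.erase (Fin.castSucc k1) : Finset (Fin (K+1))),
            x j * W (j : Fin (K+1)) ω)
            = ∑ j ∈ Finset.univ.erase (Fin.castSucc k1), x j * W j ω :=
          Finset.sum_coe_sort (Finset.univ.erase (Fin.castSucc k1)) (fun j => x j * W j ω)
        have e1 : ((∑ j, x j * (Fin.snoc (fun k => U k ω) (eps ω) : Fin (K+1) → ℝ) j : ℝ) : ℂ)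
            = ((x (Fin.castSucc k1) * W (Fin.castSucc k1) ω : ℝ) : ℂ)
              + ((∑ j : (Finset.univ.erase (Fin.castSucc k1) : Finset (Fin (K+1))),
                  x j * W (j : Fin (K+1)) ω : ℝ) : ℂ) := by
          rw [e0, e3, ← Finset.add_sum_erase _ _ (Finset.mem_univ (Fin.castSucc k1))]
          push_cast
          ring
        rw [e1, mul_add, Complex.exp_add]
      rw [h5]
      have hdisj : Disjoint ({Fin.castSucc k1} : Finset (Fin (K+1)))
          (Finset.univ.erase (Fin.castSucc k1)) := by
        simp [Finset.disjoint_left]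
      have hindep12 := hIndep1.indepFun_finset ({Fin.castSucc k1} : Finset (Fin (K+1)))
        (Finset.univ.erase (Fin.castSucc k1)) hdisj hWm
      rw [indep_integral_mul
        (A := fun a (i : ({Fin.castSucc k1} : Finset (Fin (K+1)))) => W i a)
        (B := fun a (i : (Finset.univ.erase (Fin.castSucc k1) : Finset (Fin (K+1)))) => W i a)
        (f := fun y : ({Fin.castSucc k1} : Finset (Fin (K+1))) → ℝ =>
          Complex.exp (Complex.I * ((x (Fin.castSucc k1)
            * y ⟨Fin.castSucc k1, Finset.mem_singleton_self _⟩ : ℝ) : ℂ)))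
        (g := fun y : (Finset.univ.erase (Fin.castSucc k1) : Finset (Fin (K+1))) → ℝ =>
          Complex.exp (Complex.I *
            ((∑ j : (Finset.univ.erase (Fin.castSucc k1) : Finset (Fin (K+1))),
              x j * y j : ℝ) : ℂ)))
        (measurable_pi_lambda
          (fun a (i : ({Fin.castSucc k1} : Finset (Fin (K+1)))) => W i a)
          (fun i => hWm i)).aemeasurable
        (measurable_pi_lambda
          (fun a (i : (Finset.univ.erase (Fin.castSucc k1) : Finset (Fin (K+1)))) => W i a)
          (fun i => hWm i)).aemeasurable hindep12
        (Complex.continuous_exp.comp (continuous_const.mul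
          (Complex.continuous_ofReal.comp (continuous_const.mul (continuous_apply _)))))
        (Complex.continuous_exp.comp (continuous_const.mul
          (Complex.continuous_ofReal.comp
            (continuous_finset_sum _ (fun j _ => continuous_const.mul (continuous_apply _))))))]
      congr 1
      · -- first factor equals Phi1 (P1 x)
        rw [hPhi1def, charF]
        congr 1
        funext ω
        simp only [hZ1def]
        congr 2
        rw [Fin.sum_univ_one, hP1app]
      · -- second factor equals G2 x
        rw [hG2def, charF]
        congr 1
        funext ω
        simp only
        congr 2
        rw [Finset.sum_coe_sort (Finset.univ.erase (Fin.castSucc k1))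
          (fun j => x j * W j ω)]
        rw [← Finset.add_sum_erase Finset.univ (fun j => x j * W2 ω j) (Finset.mem_univ (Fin.castSucc k1))]
        have : W2 ω (Fin.castSucc k1) = 0 := by simp [hW2def]
        rw [this, mul_zero, zero_add]
        congr 1
        refine Finset.sum_congr rfl (fun j hj => ?_)
        have hjne : j ≠ Fin.castSucc k1 := (Finset.mem_erase.1 hj).1
        simp [hW2def, hjne]
    rw [h3, h4]
    ring
  -- nonvanishing of the factors
  rw [hfact] at hne
  have h1 : F (Tclm s) ≠ 0 := left_ne_zero_of_mul hne
  have h23 : Phi1 (P1 s) * G2 s ≠ 0 := right_ne_zero_of_mul hne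
  have h2 : Phi1 (P1 s) ≠ 0 := left_ne_zero_of_mul h23
  have h3 : G2 s ≠ 0 := right_ne_zero_of_mul h23
  -- images of basis vectors
  have hcne : Fin.castSucc k1 ≠ Fin.castSucc k2 := fun h => hk (Fin.castSucc_inj.1 h)
  have hT1 : Tclm (Pi.single (Fin.castSucc k1) 1) = Pi.single k1 1 := by
    funext k
    rw [hTapp]
    simp [Pi.single_apply, Fin.castSucc_inj, (Fin.castSucc_lt_last k1).ne']
  have hT2 : Tclm (Pi.single (Fin.castSucc k2) 1) = Pi.single k2 1 := by
    funext k
    rw [hTapp]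
    simp [Pi.single_apply, Fin.castSucc_inj, (Fin.castSucc_lt_last k2).ne']
  have hP1s : P1 (Pi.single (Fin.castSucc k2) 1) = 0 := by
    funext i
    rw [hP1app]
    simp [Pi.single_apply, hcne]
  have hP2s : P2 (Pi.single (Fin.castSucc k1) 1) = 0 := by
    funext j
    rw [hP2app]
    by_cases h : j = Fin.castSucc k1 <;> simp [h, Pi.single_apply]
  have hG2P : (fun x => G2 (P2 x)) = G2 := by
    funext x
    rw [hG2def]
    rw [charF, charF]
    congr 1
    funext ω
    congr 2
    congr 1
    refine Finset.sum_congr rfl (fun j _ => ?_)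
    by_cases h : j = Fin.castSucc k1
    · simp [hP2app, hW2def, h]
    · simp [hP2app, hW2def, h]
  have hzero1 : Lam (Fin.castSucc k1) (Fin.castSucc k2) (fun x => Phi1 (P1 x)) s = 0 :=
    Lam_zero_right hPhi1C P1 _ _ hP1s s
  have hzero2 : Lam (Fin.castSucc k1) (Fin.castSucc k2) G2 s = 0 := by
    rw [← hG2P]
    exact Lam_zero_left hG2C P2 _ _ hP2s s
  have hTs : Tclm s = fun k => s (Fin.castSucc k) + β k * s (Fin.last K) :=
    funext fun k => hTapp s k
  rw [hfact]
  rw [Lam_mul (Fin.castSucc k1) (Fin.castSucc k2) (f := fun x => F (Tclm x)) (g := fun x => Phi1 (P1 x) * G2 x)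
    (hFC.comp Tclm.contDiff) ((hPhi1C.comp P1.contDiff).mul hG2C) s h1 h23]
  rw [Lam_mul (Fin.castSucc k1) (Fin.castSucc k2) (f := fun x => Phi1 (P1 x)) (g := G2)
    (hPhi1C.comp P1.contDiff) hG2C s h2 h3]
  rw [hzero1, hzero2, Lam_comp hFC Tclm (Fin.castSucc k1) (Fin.castSucc k2) k1 k2 hT1 hT2 s,
    hTs]
  ring
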